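/- The Pauli matrix model is multiplicative into projections: for c_1 = [[1,0],[0,1]], c_2 = [[i,0],[0,−i]], c_3 = [[0,1],[−1,0]], c_4 = [[0,i],[i,0]] and any x ∈ SU(2), the matrices U_{ij}^x = Proj(c_i x c_j) (orthogonal projection in M_2(ℂ) ≅ ℂ^4 with normalized trace inner product onto the line spanned by c_i x c_j) form a 4×4 magic matrix: each row and column sums to the identity of M_4(ℂ) ≅ B(M_2(ℂ)). -/

import Mathlib

open Complex BigOperators Matrix

private lemma pauli_unitary (c : Fin 4 → Matrix (Fin 2) (Fin 2) ℂ)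
    (hc : c = ![1, !![Complex.I, 0; 0, -Complex.I], !![0, 1; -1, 0],
      !![0, Complex.I; Complex.I, 0]]) (i : Fin 4) :
    (c i)ᴴ * (c i) = 1 ∧ (c i) * (c i)ᴴ = 1 := by
  subst hc
  fin_cases i <;>
    constructor <;>
      · ext a b
        fin_cases a <;> fin_cases b <;>
          simp [Matrix.mul_apply, Fin.sum_univ_two, Matrix.conjTranspose_apply,
            Matrix.one_apply]

private lemma pauli_complete (c : Fin 4 → Matrix (Fin 2) (Fin 2) ℂ)
    (hc : c = ![1, !![Complex.I, 0; 0, -Complex.I], !![0, 1; -1, 0],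
      !![0, Complex.I; Complex.I, 0]]) (m : Matrix (Fin 2) (Fin 2) ℂ) :
    ∑ i, (((c i)ᴴ * m).trace / 2) • c i = m := by
  subst hc
  ext a b
  fin_cases a <;> fin_cases b <;>
    · simp [Fin.sum_univ_four, Matrix.trace, Matrix.diag, Matrix.mul_apply,
        Fin.sum_univ_two, Matrix.conjTranspose_apply, Matrix.one_apply]
      ring_nf
      simp [Complex.ext_iff]
      ring_nf
      try constructor <;> trivial

theorem pauli_model_magic
    (c : Fin 4 → Matrix (Fin 2) (Fin 2) ℂ)
    (hc : c = ![1, !![Complex.I, 0; 0, -Complex.I], !![0, 1; -1, 0],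
      !![0, Complex.I; Complex.I, 0]])
    (x : Matrix (Fin 2) (Fin 2) ℂ) (hx : x ∈ Matrix.specialUnitaryGroup (Fin 2) ℂ)
    (U : Fin 4 → Fin 4 → Matrix (Fin 2) (Fin 2) ℂ → Matrix (Fin 2) (Fin 2) ℂ)
    (hU : ∀ i j a, U i j a =
      ((((c i * x * c j)ᴴ * a).trace) / 2) • (c i * x * c j)) :
    (∀ i j a, U i j (U i j a) = U i j a) ∧
    (∀ j a, ∑ i, U i j a = a) ∧
    (∀ i a, ∑ j, U i j a = a) := by
  have hxu : x ∈ Matrix.unitaryGroup (Fin 2) ℂ :=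
    (Matrix.mem_specialUnitaryGroup_iff.mp hx).1
  have hx1 : xᴴ * x = 1 := by
    have := Matrix.mem_unitaryGroup_iff'.mp hxu
    simpa [Matrix.star_eq_conjTranspose] using this
  have hx2 : x * xᴴ = 1 := by
    have := Matrix.mem_unitaryGroup_iff.mp hxu
    simpa [Matrix.star_eq_conjTranspose] using this
  refine ⟨?_, ?_, ?_⟩
  · -- idempotence
    intro i j a
    have hb : (c i * x * c j)ᴴ * (c i * x * c j) = 1 := by
      simp only [Matrix.conjTranspose_mul, Matrix.mul_assoc]
      rw [← Matrix.mul_assoc (c i)ᴴ (c i), (pauli_unitary c hc i).1, Matrix.one_mul,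
        ← Matrix.mul_assoc xᴴ x, hx1, Matrix.one_mul, (pauli_unitary c hc j).1]
    simp only [hU]
    rw [Matrix.mul_smul, Matrix.trace_smul, hb, Matrix.trace_one]
    simp only [smul_eq_mul, Fintype.card_fin, Nat.cast_ofNat]
    congr 1
    ring
  · -- row sums
    intro j a
    have key := pauli_complete c hc (a * ((c j)ᴴ * xᴴ))
    calc ∑ i, U i j a
        = (∑ i, (((c i)ᴴ * (a * ((c j)ᴴ * xᴴ))).trace / 2) • c i) * (x * c j) := by
          rw [Finset.sum_mul]
          refine Finset.sum_congr rfl fun i _ => ?_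
          rw [hU]
          have htr : ((c i * x * c j)ᴴ * a).trace
              = ((c i)ᴴ * (a * ((c j)ᴴ * xᴴ))).trace := by
            simp only [Matrix.conjTranspose_mul, Matrix.mul_assoc]
            rw [Matrix.trace_mul_comm]
            simp only [Matrix.mul_assoc]
            rw [Matrix.trace_mul_comm]
            simp only [Matrix.mul_assoc]
          rw [htr, Matrix.smul_mul, Matrix.mul_assoc]
      _ = a := by
          rw [key]
          simp only [Matrix.mul_assoc]
          rw [← Matrix.mul_assoc xᴴ x, hx1, Matrix.one_mul,
            (pauli_unitary c hc j).1, Matrix.mul_one]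
  · -- column sums
    intro i a
    have key := pauli_complete c hc (xᴴ * ((c i)ᴴ * a))
    calc ∑ j, U i j a
        = (c i * x) * ∑ j, (((c j)ᴴ * (xᴴ * ((c i)ᴴ * a))).trace / 2) • c j := by
          rw [Finset.mul_sum]
          refine Finset.sum_congr rfl fun j _ => ?_
          rw [hU, Matrix.mul_smul]
          congr 2
          simp only [Matrix.conjTranspose_mul, Matrix.mul_assoc]
      _ = a := by
          rw [key]
          simp only [Matrix.mul_assoc]
          rw [← Matrix.mul_assoc x xᴴ, hx2, Matrix.one_mul,
            ← Matrix.mul_assoc (c i) (c i)ᴴ a, (pauli_unitary c hc i).2,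
            Matrix.one_mul]
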